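/- For three unit vectors in the plane (ℝ²) with pairwise angles ν, ν', ν'' (each in [0,π]) satisfying ν + ν' ≥ π, ν + ν'' ≥ π, ν' + ν'' ≥ π, the three vectors do not all lie in any closed half-plane whose boundary line passes through the origin, except possibly on the boundary; equivalently, 0 is in the convex hull of the three vectors. -/

import Mathlib

open InnerProductGeometry RealInnerProductSpace

set_option maxHeartbeats 1000000 in
/-- Key algebraic fact: for cosines of planar angles with pairwise sums ≤ 0
(coming from angle sums ≥ π) and the planar Gram constraint, `c ≤ a*b`. -/
lemma zero_mem_convexHull_key {a b c : ℝ} (ha : -1 < a) (hb : -1 < b) (hc : -1 < c)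
    (hab : a + b ≤ 0) (hac : a + c ≤ 0) (hbc : b + c ≤ 0)
    (hg : 1 + 2*a*b*c - a^2 - b^2 - c^2 = 0) : c ≤ a*b := by
  nlinarith [sq_nonneg (c - a*b), sq_nonneg (a+b), sq_nonneg (a-b),
    mul_pos (by linarith : (0:ℝ) < 1+a) (by linarith : (0:ℝ) < 1+b),
    mul_pos (by linarith : (0:ℝ) < 1+a) (by linarith : (0:ℝ) < 1+c),
    mul_pos (by linarith : (0:ℝ) < 1+b) (by linarith : (0:ℝ) < 1+c),
    sq_nonneg (a+b+c+1)]

/-- Helper: a convex combination with three nonnegative weights summing to a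
positive number which annihilates the three vectors puts `0` in the hull. -/
lemma zero_mem_convexHull_of_weights (v₁ v₂ v₃ : EuclideanSpace ℝ (Fin 2)) (w : Fin 3 → ℝ)
    (hw : ∀ i, 0 ≤ w i) (hs : 0 < w 0 + w 1 + w 2)
    (hz : w 0 • v₁ + w 1 • v₂ + w 2 • v₃ = 0) :
    (0 : EuclideanSpace ℝ (Fin 2)) ∈ convexHull ℝ {v₁, v₂, v₃} := by
  have hmem := Finset.centerMass_mem_convexHull (Finset.univ : Finset (Fin 3))
    (w := w) (z := ![v₁, v₂, v₃]) (s := {v₁, v₂, v₃})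
    (fun i _ => hw i) (by rw [Fin.sum_univ_three]; exact hs)
    (fun i _ => by fin_cases i <;> simp)
  rw [Finset.centerMass, Fin.sum_univ_three, Fin.sum_univ_three] at hmem
  simpa [hz] using hmem

/-- Helper: antipodal pair puts `0` in the hull. -/
lemma zero_mem_convexHull_of_antipodal {s : Set (EuclideanSpace ℝ (Fin 2))}
    {x y : EuclideanSpace ℝ (Fin 2)} (hx : x ∈ s) (hy : y ∈ s) (h : x + y = 0) :
    (0 : EuclideanSpace ℝ (Fin 2)) ∈ convexHull ℝ s := by
  have h1 : x ∈ convexHull ℝ s := subset_convexHull ℝ _ hx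
  have h2 : y ∈ convexHull ℝ s := subset_convexHull ℝ _ hy
  have hcomb := (convex_convexHull ℝ s) h1 h2
      (by norm_num : (0:ℝ) ≤ 1/2) (by norm_num : (0:ℝ) ≤ 1/2) (by norm_num)
  have : (1/2 : ℝ) • x + (1/2 : ℝ) • y = 0 := by
    rw [← smul_add, h, smul_zero]
  rwa [this] at hcomb

/-- Three unit vectors in the plane whose pairwise angles
ν, ν', ν'' satisfy ν+ν' ≥ π, ν+ν'' ≥ π, ν'+ν'' ≥ π have the origin in their
convex hull. -/
theorem zero_mem_convexHull_of_angle_sums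
    (v₁ v₂ v₃ : EuclideanSpace ℝ (Fin 2))
    (h₁ : ‖v₁‖ = 1) (h₂ : ‖v₂‖ = 1) (h₃ : ‖v₃‖ = 1)
    (h12 : InnerProductGeometry.angle v₁ v₂ + InnerProductGeometry.angle v₁ v₃ ≥ Real.pi)
    (h13 : InnerProductGeometry.angle v₁ v₂ + InnerProductGeometry.angle v₂ v₃ ≥ Real.pi)
    (h23 : InnerProductGeometry.angle v₁ v₃ + InnerProductGeometry.angle v₂ v₃ ≥ Real.pi) :
    (0 : EuclideanSpace ℝ (Fin 2)) ∈ convexHull ℝ {v₁, v₂, v₃} := by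
  -- step 1: translate angle-sum hypotheses into inner-product inequalities
  have cos_eq : ∀ x y : EuclideanSpace ℝ (Fin 2), ‖x‖ = 1 → ‖y‖ = 1 →
      Real.cos (angle x y) = ⟪x, y⟫ := by
    intro x y hx hy
    rw [cos_angle, hx, hy]; norm_num
  have sum_le : ∀ x y z w : EuclideanSpace ℝ (Fin 2), ‖x‖ = 1 → ‖y‖ = 1 → ‖z‖ = 1 → ‖w‖ = 1 →
      angle x y + angle z w ≥ Real.pi → ⟪x, y⟫ + ⟪z, w⟫ ≤ 0 := by
    intro x y z w hx hy hz hw h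
    have h1 : Real.cos (angle z w) ≤ Real.cos (Real.pi - angle x y) :=
      Real.cos_le_cos_of_nonneg_of_le_pi (by linarith [angle_le_pi x y]) (angle_le_pi z w)
        (by linarith)
    rw [Real.cos_pi_sub] at h1
    rw [cos_eq x y hx hy, cos_eq z w hz hw] at h1
    linarith
  have k12 : ⟪v₁, v₂⟫ + ⟪v₁, v₃⟫ ≤ 0 := sum_le v₁ v₂ v₁ v₃ h₁ h₂ h₁ h₃ h12
  have k13 : ⟪v₁, v₂⟫ + ⟪v₂, v₃⟫ ≤ 0 := sum_le v₁ v₂ v₂ v₃ h₁ h₂ h₂ h₃ h13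
  have k23 : ⟪v₁, v₃⟫ + ⟪v₂, v₃⟫ ≤ 0 := sum_le v₁ v₃ v₂ v₃ h₁ h₃ h₂ h₃ h23
  have ge12 : -1 ≤ ⟪v₁, v₂⟫ := by
    have h := abs_real_inner_le_norm v₁ v₂; rw [h₁, h₂] at h; linarith [(abs_le.1 h).1]
  have ge13 : -1 ≤ ⟪v₁, v₃⟫ := by
    have h := abs_real_inner_le_norm v₁ v₃; rw [h₁, h₃] at h; linarith [(abs_le.1 h).1]
  have ge23 : -1 ≤ ⟪v₂, v₃⟫ := by
    have h := abs_real_inner_le_norm v₂ v₃; rw [h₂, h₃] at h; linarith [(abs_le.1 h).1]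
  -- antipodal degenerate cases
  have antipodal : ∀ x y : EuclideanSpace ℝ (Fin 2), ‖x‖ = 1 → ‖y‖ = 1 →
      ⟪x, y⟫ = -1 → x + y = 0 := by
    intro x y hx hy h
    have hn : ‖x + y‖ ^ 2 = 0 := by
      rw [norm_add_sq_real, hx, hy, h]; ring
    have : ‖x + y‖ = 0 := by
      have := sq_eq_zero_iff.1 hn; exact this
    exact norm_eq_zero.1 this
  rcases eq_or_lt_of_le ge12 with hdeg | g12
  · exact zero_mem_convexHull_of_antipodal (by simp) (by simp)
      (antipodal v₁ v₂ h₁ h₂ hdeg.symm)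
  rcases eq_or_lt_of_le ge13 with hdeg | g13
  · exact zero_mem_convexHull_of_antipodal (x := v₁) (y := v₃) (by simp) (by simp)
      (antipodal v₁ v₃ h₁ h₃ hdeg.symm)
  rcases eq_or_lt_of_le ge23 with hdeg | g23
  · exact zero_mem_convexHull_of_antipodal (x := v₂) (y := v₃) (by simp) (by simp)
      (antipodal v₂ v₃ h₂ h₃ hdeg.symm)
  -- coordinates
  set a1 := v₁ 0 with ha1; set b1 := v₁ 1 with hb1
  set a2 := v₂ 0 with ha2; set b2 := v₂ 1 with hb2
  set a3 := v₃ 0 with ha3; set b3 := v₃ 1 with hb3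
  have norm_coord : ∀ x : EuclideanSpace ℝ (Fin 2), ‖x‖ = 1 → (x 0)^2 + (x 1)^2 = 1 := by
    intro x hx
    have h := real_inner_self_eq_norm_sq x
    rw [hx] at h
    simp only [PiLp.inner_apply, Fin.sum_univ_two, RCLike.inner_apply, conj_trivial] at h
    nlinarith [h]
  have n1 : a1^2 + b1^2 = 1 := norm_coord v₁ h₁
  have n2 : a2^2 + b2^2 = 1 := norm_coord v₂ h₂
  have n3 : a3^2 + b3^2 = 1 := norm_coord v₃ h₃
  have i12 : ⟪v₁, v₂⟫ = a1*a2 + b1*b2 := by simp [PiLp.inner_apply, Fin.sum_univ_two, ha1, hb1, ha2, hb2]; ring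
  have i13 : ⟪v₁, v₃⟫ = a1*a3 + b1*b3 := by simp [PiLp.inner_apply, Fin.sum_univ_two, ha1, hb1, ha3, hb3]; ring
  have i23 : ⟪v₂, v₃⟫ = a2*a3 + b2*b3 := by simp [PiLp.inner_apply, Fin.sum_univ_two, ha2, hb2, ha3, hb3]; ring
  rw [i12, i13] at k12; rw [i12, i23] at k13; rw [i13, i23] at k23
  rw [i12] at g12; rw [i13] at g13; rw [i23] at g23
  set d12 := a1*a2 + b1*b2 with hd12
  set d13 := a1*a3 + b1*b3 with hd13
  set d23 := a2*a3 + b2*b3 with hd23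
  set p := a1*b2 - b1*a2 with hp
  set q := a1*b3 - b1*a3 with hq
  set r := a2*b3 - b2*a3 with hr
  -- Lagrange / Binet-Cauchy identities
  have hp2 : p^2 = 1 - d12^2 := by
    rw [hp, hd12]; linear_combination (a2^2 + b2^2) * n1 + n2
  have hq2 : q^2 = 1 - d13^2 := by
    rw [hq, hd13]; linear_combination (a3^2 + b3^2) * n1 + n3
  have hr2 : r^2 = 1 - d23^2 := by
    rw [hr, hd23]; linear_combination (a3^2 + b3^2) * n2 + n3
  have hpr : p * r = d12 * d23 - d13 := by
    rw [hp, hr, hd12, hd23, hd13]; linear_combination (-(a1*a3 + b1*b3)) * n2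
  have hpq : p * q = d23 - d12 * d13 := by
    rw [hp, hq, hd23, hd12, hd13]; linear_combination (a2*a3 + b2*b3) * n1
  have hqr : q * r = d12 - d13 * d23 := by
    rw [hq, hr, hd12, hd13, hd23]; linear_combination (a1*a2 + b1*b2) * n3
  -- bounds
  have lt12 : d12 < 1 := by linarith
  have lt13 : d13 < 1 := by linarith
  have lt23 : d23 < 1 := by linarith
  -- Gram constraint; apply key lemma three ways
  have gram : 1 + 2*d12*d23*d13 - d12^2 - d23^2 - d13^2 = 0 := by
    have h : (d12*d23 - d13)^2 = (1 - d12^2) * (1 - d23^2) := by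
      rw [← hp2, ← hr2, ← hpr]; ring
    linear_combination -h
  have key1 : d13 ≤ d12 * d23 :=
    zero_mem_convexHull_key g12 g23 g13 k13 k12 (by linarith) (by linear_combination gram)
  have key2 : d23 ≤ d12 * d13 :=
    zero_mem_convexHull_key g12 g13 g23 k12 k13 k23 (by linear_combination gram)
  have key3 : d12 ≤ d13 * d23 :=
    zero_mem_convexHull_key g13 g23 g12 (by linarith) (by linarith) (by linarith) (by linear_combination gram)
  -- p ≠ 0
  have hp2pos : 0 < p^2 := by
    have h := mul_pos (by linarith : (0:ℝ) < 1 - d12) (by linarith : (0:ℝ) < 1 + d12)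
    have h2 : (1 - d12) * (1 + d12) = 1 - d12^2 := by ring
    rw [hp2, ← h2]; exact h
  have hpne : p ≠ 0 := by
    intro h; rw [h] at hp2pos; simp at hp2pos
  have hprnn : 0 ≤ p * r := by rw [hpr]; linarith
  have hpqnp : p * q ≤ 0 := by rw [hpq]; linarith
  -- the annihilating identity r•v₁ - q•v₂ + p•v₃ = 0
  have hz : r • v₁ + (-q) • v₂ + p • v₃ = 0 := by
    ext i
    fin_cases i <;>
      simp [PiLp.add_apply, PiLp.smul_apply, smul_eq_mul, hp, hq, hr,
        ← ha1, ← hb1, ← ha2, ← hb2, ← ha3, ← hb3] <;> ring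
  rcases lt_or_gt_of_ne hpne with hneg | hpos
  · -- p < 0 : use weights (-r, q, -p)
    have hrle : r ≤ 0 := by
      by_contra hcon; push_neg at hcon
      have := mul_neg_of_neg_of_pos hneg hcon; linarith
    have hqge : 0 ≤ q := by
      by_contra hcon; push_neg at hcon
      have := mul_pos_of_neg_of_neg hneg hcon; linarith
    refine zero_mem_convexHull_of_weights v₁ v₂ v₃ ![-r, q, -p] ?_ ?_ ?_
    · intro i
      fin_cases i <;> simp <;> linarith
    · simp; linarith
    · simp only [Matrix.cons_val_zero, Matrix.cons_val_one, Matrix.head_cons,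
        Matrix.cons_val_two, Matrix.tail_cons]
      have heq : (-r) • v₁ + q • v₂ + (-p) • v₃ = -(r • v₁ + (-q) • v₂ + p • v₃) := by module
      rw [heq, hz, neg_zero]
  · -- p > 0 : use weights (r, -q, p)
    have hrge : 0 ≤ r := by
      by_contra hcon; push_neg at hcon
      have := mul_neg_of_pos_of_neg hpos hcon; linarith
    have hqle : q ≤ 0 := by
      by_contra hcon; push_neg at hcon
      have := mul_pos hpos hcon; linarith
    refine zero_mem_convexHull_of_weights v₁ v₂ v₃ ![r, -q, p] ?_ ?_ ?_
    · intro i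
      fin_cases i <;> simp <;> linarith
    · simp; linarith
    · simpa using hz
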